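/- Let Mⱼ be an increasing sequence of open subsets of ℂⁿ whose union M = ∪ⱼ Mⱼ is connected, let Ω ⊆ ℂⁿ be a bounded open set, and let ψʲ : Mⱼ → Ω be biholomorphisms. Fix z⁰ ∈ M₁ and set pʲ = ψʲ(z⁰). Suppose that C^B_Ω(pʲ)/K^B_Ω(pʲ) → 1 as j → ∞ and that K^B_M(z⁰) > 0. Then C^B_M(z⁰) = K^B_M(z⁰). -/

import Mathlib

open Metric Set Filter

noncomputable section

/-- The ball-variant Carathéodory volume coefficient
`C^B_Y(p) = sup { |det Df(p)|² : f : Y → 𝔹ⁿ holomorphic, f(p) = 0 }`. -/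
def caraBall (n : ℕ) (Y : Set (EuclideanSpace ℂ (Fin n)))
    (p : EuclideanSpace ℂ (Fin n)) : ℝ :=
  sSup {x : ℝ | ∃ f : EuclideanSpace ℂ (Fin n) → EuclideanSpace ℂ (Fin n),
    DifferentiableOn ℂ f Y ∧ MapsTo f Y (ball (0 : EuclideanSpace ℂ (Fin n)) 1) ∧
    f p = 0 ∧ x = ‖(fderiv ℂ f p).det‖ ^ 2}

/-- The ball-variant Kobayashi–Eisenman volume coefficient
`K^B_Y(p) = inf { |det Dg(0)|⁻² : g : 𝔹ⁿ → Y holomorphic, g(0) = p, det Dg(0) ≠ 0 }`. -/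
def kobBall (n : ℕ) (Y : Set (EuclideanSpace ℂ (Fin n)))
    (p : EuclideanSpace ℂ (Fin n)) : ℝ :=
  sInf {x : ℝ | ∃ g : EuclideanSpace ℂ (Fin n) → EuclideanSpace ℂ (Fin n),
    DifferentiableOn ℂ g (ball (0 : EuclideanSpace ℂ (Fin n)) 1) ∧
    MapsTo g (ball (0 : EuclideanSpace ℂ (Fin n)) 1) Y ∧ g 0 = p ∧
    (fderiv ℂ g 0).det ≠ 0 ∧ x = (‖(fderiv ℂ g 0).det‖ ^ 2)⁻¹}

set_option maxHeartbeats 1000000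
set_option synthInstance.maxHeartbeats 400000

namespace Stmt16Aux

variable {n m : ℕ}


/-- coordinate bound -/
lemma coord_le_norm (x : EuclideanSpace ℂ (Fin n)) (i : Fin n) : ‖x i‖ ≤ ‖x‖ := by
  rw [EuclideanSpace.norm_eq]
  have h1 : ‖x i‖ ^ 2 ≤ ∑ j, ‖x j‖ ^ 2 :=
    Finset.single_le_sum (f := fun j => ‖x j‖ ^ 2) (fun j _ => by positivity) (Finset.mem_univ i)
  calc ‖x i‖ = Real.sqrt (‖x i‖ ^ 2) := (Real.sqrt_sq (norm_nonneg _)).symm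
    _ ≤ _ := Real.sqrt_le_sqrt h1

/-- determinant bound by operator norm -/
lemma det_norm_le (A : EuclideanSpace ℂ (Fin n) →L[ℂ] EuclideanSpace ℂ (Fin n)) :
    ‖A.det‖ ≤ (Nat.factorial n : ℝ) * ‖A‖ ^ n := by
  classical
  set b := (EuclideanSpace.basisFun (Fin n) ℂ).toBasis with hb
  have hA : A.det = ((LinearMap.toMatrix b b) (A : EuclideanSpace ℂ (Fin n) →ₗ[ℂ] EuclideanSpace ℂ (Fin n))).det :=
    (LinearMap.det_toMatrix b _).symm
  have hentry : ∀ i j : Fin n, ‖(LinearMap.toMatrix b b) (A : EuclideanSpace ℂ (Fin n) →ₗ[ℂ] EuclideanSpace ℂ (Fin n)) i j‖ ≤ ‖A‖ := by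
    intro i j
    rw [LinearMap.toMatrix_apply]
    have h1 : (b.repr ((A : EuclideanSpace ℂ (Fin n) →ₗ[ℂ] EuclideanSpace ℂ (Fin n)) (b j))) i = (A (b j)) i := by
      rw [hb, OrthonormalBasis.coe_toBasis_repr_apply, EuclideanSpace.basisFun_repr]
      rfl
    rw [h1]
    refine (coord_le_norm _ i).trans ?_
    have h2 : ‖A (b j)‖ ≤ ‖A‖ * ‖b j‖ := A.le_opNorm _
    have h3 : ‖b j‖ = 1 := by
      rw [hb, OrthonormalBasis.coe_toBasis, EuclideanSpace.basisFun_apply,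
        EuclideanSpace.norm_single]
      simp
    rw [h3, mul_one] at h2
    exact h2
  rw [hA, Matrix.det_apply]
  set Mx := (LinearMap.toMatrix b b) (A : EuclideanSpace ℂ (Fin n) →ₗ[ℂ] EuclideanSpace ℂ (Fin n))
  calc ‖∑ σ : Equiv.Perm (Fin n), Equiv.Perm.sign σ • ∏ i, Mx (σ i) i‖
      ≤ ∑ σ : Equiv.Perm (Fin n), ‖Equiv.Perm.sign σ • ∏ i, Mx (σ i) i‖ := norm_sum_le _ _
    _ ≤ ∑ σ : Equiv.Perm (Fin n), ‖A‖ ^ n := by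
        refine Finset.sum_le_sum fun σ _ => ?_
        have hs : ‖Equiv.Perm.sign σ • ∏ i, Mx (σ i) i‖ = ‖∏ i, Mx (σ i) i‖ := by
          rcases Int.units_eq_one_or (Equiv.Perm.sign σ) with h | h <;> simp [h]
        rw [hs, norm_prod]
        calc ∏ i, ‖Mx (σ i) i‖ ≤ ∏ _i : Fin n, ‖A‖ :=
              Finset.prod_le_prod (fun i _ => norm_nonneg _) (fun i _ => hentry _ _)
          _ = ‖A‖ ^ n := by
              rw [Finset.prod_const, Finset.card_univ, Fintype.card_fin]
    _ = (Nat.factorial n : ℝ) * ‖A‖ ^ n := by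
        rw [Finset.sum_const, Finset.card_univ, Fintype.card_perm, Fintype.card_fin,
          nsmul_eq_mul]

/-- Schwarz: centered directional derivative bound -/
lemma opnorm_fderiv_le {F : EuclideanSpace ℂ (Fin n) → EuclideanSpace ℂ (Fin m)}
    {x : EuclideanSpace ℂ (Fin n)} {R r : ℝ}
    (hR : 0 < R) (hd : DifferentiableOn ℂ F (ball x R))
    (hmaps : MapsTo F (ball x R) (ball (F x) r)) :
    ‖fderiv ℂ F x‖ ≤ r / R := by
  have hr : 0 < r := by
    have := hmaps (mem_ball_self hR); simpa using this
  refine ContinuousLinearMap.opNorm_le_bound _ (by positivity) fun u => ?_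
  rcases eq_or_ne u 0 with rfl | hu
  · simp
  have hun : (0:ℝ) < ‖u‖ := norm_pos_iff.2 hu
  set v : EuclideanSpace ℂ (Fin n) := (‖u‖ : ℂ)⁻¹ • u with hv
  have hvn : ‖v‖ = 1 := by
    rw [hv, norm_smul]
    simp [hun.ne']
  set φ : ℂ → EuclideanSpace ℂ (Fin m) := fun t => F (x + t • v) with hφ
  have hline : ∀ t : ℂ, t ∈ ball (0:ℂ) R → x + t • v ∈ ball x R := by
    intro t ht
    rw [mem_ball] at ht ⊢
    rw [dist_eq_norm]
    simp only [add_sub_cancel_left, norm_smul, hvn, mul_one]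
    simpa [Complex.dist_eq] using ht
  have hφd : DifferentiableOn ℂ φ (ball (0:ℂ) R) := by
    intro t ht
    have h1 : DifferentiableAt ℂ F (x + t • v) :=
      hd.differentiableAt (isOpen_ball.mem_nhds (hline t ht))
    have h2 : DifferentiableAt ℂ (fun t : ℂ => x + t • v) t := by
      apply DifferentiableAt.const_add
      exact (differentiableAt_id.smul_const v)
    exact (h1.comp t h2).differentiableWithinAt
  have hφ0 : φ 0 = F x := by simp [hφ]
  have hφm : MapsTo φ (ball (0:ℂ) R) (ball (φ 0) r) := by
    intro t ht
    rw [hφ0]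
    exact hmaps (hline t ht)
  have hder : HasDerivAt φ (fderiv ℂ F x v) 0 := by
    have h2 : HasDerivAt (fun t : ℂ => x + t • v) v 0 := by
      simpa using ((hasDerivAt_id (0:ℂ)).smul_const v).const_add x
    have h1 : HasFDerivAt F (fderiv ℂ F x) ((fun t : ℂ => x + t • v) 0) := by
      simp only [zero_smul, add_zero]
      exact (hd.differentiableAt (isOpen_ball.mem_nhds (mem_ball_self hR))).hasFDerivAt
    exact h1.comp_hasDerivAt 0 h2
  have hval : ‖fderiv ℂ F x v‖ ≤ r / R := by
    have := Complex.norm_deriv_le_div_of_mapsTo_ball hφd (hφm.mono_right ball_subset_closedBall) hR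
    rwa [hder.deriv] at this
  have huv : u = (‖u‖ : ℂ) • v := by
    rw [hv, smul_smul]
    rw [mul_inv_cancel₀ (by exact_mod_cast hun.ne')]
    simp
  calc ‖(fderiv ℂ F x) u‖ = ‖(fderiv ℂ F x) ((‖u‖ : ℂ) • v)‖ := by rw [← huv]
    _ = ‖u‖ * ‖(fderiv ℂ F x) v‖ := by
        rw [map_smul, norm_smul]
        simp
    _ ≤ ‖u‖ * (r / R) := by
        exact mul_le_mul_of_nonneg_left hval (norm_nonneg _)
    _ = r / R * ‖u‖ := mul_comm _ _

/-- Schwarz: non-centered target version -/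
lemma opnorm_fderiv_le' {F : EuclideanSpace ℂ (Fin n) → EuclideanSpace ℂ (Fin m)}
    {x : EuclideanSpace ℂ (Fin n)} {w : EuclideanSpace ℂ (Fin m)} {R r : ℝ}
    (hR : 0 < R) (hd : DifferentiableOn ℂ F (ball x R))
    (hmaps : MapsTo F (ball x R) (ball w r)) :
    ‖fderiv ℂ F x‖ ≤ 2 * r / R := by
  have h2 : MapsTo F (ball x R) (ball (F x) (2 * r)) := by
    intro y hy
    have hy1 := hmaps hy
    have hx1 := hmaps (mem_ball_self hR)
    rw [mem_ball] at hy1 hx1 ⊢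
    calc dist (F y) (F x) ≤ dist (F y) w + dist w (F x) := dist_triangle _ _ _
      _ < r + r := by rw [dist_comm w]; exact add_lt_add hy1 hx1
      _ = 2 * r := by ring
  exact opnorm_fderiv_le hR hd h2

/-- iterates of a self-map of the ball -/
lemma iter_facts {h : EuclideanSpace ℂ (Fin n) → EuclideanSpace ℂ (Fin n)}
    (hd : DifferentiableOn ℂ h (ball 0 1)) (hm : MapsTo h (ball 0 1) (ball 0 1))
    (h0 : h 0 = 0) (k : ℕ) :
    DifferentiableOn ℂ h^[k] (ball (0 : EuclideanSpace ℂ (Fin n)) 1) ∧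
      MapsTo h^[k] (ball (0 : EuclideanSpace ℂ (Fin n)) 1) (ball 0 1) ∧ h^[k] 0 = 0 ∧
      ‖(fderiv ℂ h^[k] 0).det‖ = ‖(fderiv ℂ h 0).det‖ ^ k := by
  have h0mem : (0 : EuclideanSpace ℂ (Fin n)) ∈ ball (0 : EuclideanSpace ℂ (Fin n)) 1 :=
    mem_ball_self one_pos
  induction k with
  | zero =>
    refine ⟨differentiableOn_id, ?_, rfl, ?_⟩
    · intro y hy; simpa using hy
    · simp only [Function.iterate_zero]
      rw [fderiv_id]
      simp [ContinuousLinearMap.det]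
  | succ k ih =>
    obtain ⟨ihd, ihm, ih0, ihdet⟩ := ih
    have hiter : h^[k+1] = h ∘ h^[k] := by
      funext y; rw [Function.comp_apply, Function.iterate_succ_apply']
    have hda : DifferentiableAt ℂ (h^[k]) 0 :=
      ihd.differentiableAt (isOpen_ball.mem_nhds h0mem)
    have hda2 : DifferentiableAt ℂ h ((h^[k]) 0) := by
      rw [ih0]
      exact hd.differentiableAt (isOpen_ball.mem_nhds h0mem)
    refine ⟨?_, ?_, ?_, ?_⟩
    · rw [hiter]
      exact hd.comp ihd ihm
    · rw [hiter]
      exact hm.comp ihm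
    · rw [hiter, Function.comp_apply, ih0, h0]
    · rw [hiter]
      rw [fderiv_comp 0 hda2 hda]
      have : ((fderiv ℂ h ((h^[k]) 0)).comp (fderiv ℂ (h^[k]) 0)).det
          = (fderiv ℂ h ((h^[k]) 0)).det * (fderiv ℂ (h^[k]) 0).det := by
        simp only [ContinuousLinearMap.det, ContinuousLinearMap.coe_comp]
        exact LinearMap.det_comp _ _
      rw [this, norm_mul, ihdet, ih0, pow_succ]
      ring

/-- Volume Schwarz lemma -/
lemma schwarz_det {h : EuclideanSpace ℂ (Fin n) → EuclideanSpace ℂ (Fin n)}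
    (hd : DifferentiableOn ℂ h (ball 0 1)) (hm : MapsTo h (ball 0 1) (ball 0 1))
    (h0 : h 0 = 0) : ‖(fderiv ℂ h 0).det‖ ≤ 1 := by
  by_contra hlt
  push_neg at hlt
  obtain ⟨k, hk⟩ := pow_unbounded_of_one_lt (Nat.factorial n : ℝ) hlt
  obtain ⟨hkd, hkm, hk0, hkdet⟩ := iter_facts hd hm h0 k
  have hop : ‖fderiv ℂ h^[k] 0‖ ≤ 1 := by
    have hm2 : MapsTo h^[k] (ball (0 : EuclideanSpace ℂ (Fin n)) 1)
        (ball (h^[k] 0) 1) := by rw [hk0]; exact hkm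
    have := opnorm_fderiv_le one_pos hkd hm2
    rwa [div_one] at this
  have hb := det_norm_le (fderiv ℂ h^[k] 0)
  rw [hkdet] at hb
  have : (‖(fderiv ℂ h 0).det‖ : ℝ) ^ k ≤ (Nat.factorial n : ℝ) := by
    refine hb.trans ?_
    have h1 : ‖fderiv ℂ h^[k] 0‖ ^ n ≤ 1 := pow_le_one₀ (norm_nonneg _) hop
    have h2 : (1:ℝ) ≤ (Nat.factorial n : ℝ) := by
      exact_mod_cast Nat.one_le_iff_ne_zero.2 (Nat.factorial_ne_zero n)
    nlinarith
  linarith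

/-- the Carathéodory competitor set -/
def caraSet (n : ℕ) (Y : Set (EuclideanSpace ℂ (Fin n)))
    (p : EuclideanSpace ℂ (Fin n)) : Set ℝ :=
  {x : ℝ | ∃ f : EuclideanSpace ℂ (Fin n) → EuclideanSpace ℂ (Fin n),
    DifferentiableOn ℂ f Y ∧ MapsTo f Y (ball (0 : EuclideanSpace ℂ (Fin n)) 1) ∧
    f p = 0 ∧ x = ‖(fderiv ℂ f p).det‖ ^ 2}

/-- the Kobayashi competitor set -/
def kobSet (n : ℕ) (Y : Set (EuclideanSpace ℂ (Fin n)))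
    (p : EuclideanSpace ℂ (Fin n)) : Set ℝ :=
  {x : ℝ | ∃ g : EuclideanSpace ℂ (Fin n) → EuclideanSpace ℂ (Fin n),
    DifferentiableOn ℂ g (ball (0 : EuclideanSpace ℂ (Fin n)) 1) ∧
    MapsTo g (ball (0 : EuclideanSpace ℂ (Fin n)) 1) Y ∧ g 0 = p ∧
    (fderiv ℂ g 0).det ≠ 0 ∧ x = (‖(fderiv ℂ g 0).det‖ ^ 2)⁻¹}

lemma caraSet_nonempty (n : ℕ) (Y : Set (EuclideanSpace ℂ (Fin n)))
    (p : EuclideanSpace ℂ (Fin n)) : (caraSet n Y p).Nonempty := by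
  refine ⟨_, (fun _ => 0), differentiableOn_const 0, ?_, rfl, rfl⟩
  intro y _
  simpa using one_pos

lemma kobSet_nonneg {n : ℕ} {Y : Set (EuclideanSpace ℂ (Fin n))}
    {p : EuclideanSpace ℂ (Fin n)} {x : ℝ} (hx : x ∈ kobSet n Y p) : 0 ≤ x := by
  obtain ⟨g, _, _, _, _, rfl⟩ := hx
  positivity

lemma kobSet_nonempty {n : ℕ} {Y : Set (EuclideanSpace ℂ (Fin n))}
    {p : EuclideanSpace ℂ (Fin n)} (hY : IsOpen Y) (hp : p ∈ Y) :
    (kobSet n Y p).Nonempty := by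
  obtain ⟨ε, hε, hball⟩ := Metric.isOpen_iff.1 hY p hp
  set c : ℂ := ((ε / 2 : ℝ) : ℂ) with hc
  have hcne : c ≠ 0 := by
    simp only [hc, ne_eq, Complex.ofReal_eq_zero]
    positivity
  set g : EuclideanSpace ℂ (Fin n) → EuclideanSpace ℂ (Fin n) := fun z => p + c • z with hg
  have hder : HasFDerivAt g (c • ContinuousLinearMap.id ℂ (EuclideanSpace ℂ (Fin n))) 0 := by
    have h1 : HasFDerivAt (fun z : EuclideanSpace ℂ (Fin n) => z)
        (ContinuousLinearMap.id ℂ (EuclideanSpace ℂ (Fin n))) 0 := hasFDerivAt_id 0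
    exact (h1.const_smul c).const_add p
  have hdet : (fderiv ℂ g 0).det = c ^ n := by
    rw [hder.fderiv]
    simp only [ContinuousLinearMap.det, ContinuousLinearMap.coe_smul,
      ContinuousLinearMap.coe_id]
    rw [LinearMap.det_smul, LinearMap.det_id, mul_one, finrank_euclideanSpace_fin]
  refine ⟨_, g, ?_, ?_, ?_, ?_, rfl⟩
  · exact ((differentiable_const p).add (differentiable_id.const_smul c)).differentiableOn
  · intro z hz
    apply hball
    rw [mem_ball] at hz ⊢
    rw [dist_eq_norm, hg]
    simp only [add_sub_cancel_left, norm_smul]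
    have : ‖c‖ = ε / 2 := by
      rw [hc, Complex.norm_real, Real.norm_eq_abs, abs_of_pos (by positivity)]
    rw [this]
    calc ε / 2 * ‖z‖ ≤ ε / 2 * 1 := by
          apply mul_le_mul_of_nonneg_left _ (by positivity)
          simp only [mem_ball, dist_zero_right] at hz ⊢
          exact le_of_lt (by simpa [dist_eq_norm] using hz)
      _ < ε := by linarith
  · simp [hg]
  · rw [hdet]; exact pow_ne_zero n hcne

lemma caraSet_le_kobSet {n : ℕ} {Y : Set (EuclideanSpace ℂ (Fin n))}
    {p : EuclideanSpace ℂ (Fin n)} (hY : IsOpen Y) {x y : ℝ}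
    (hx : x ∈ caraSet n Y p) (hy : y ∈ kobSet n Y p) : x ≤ y := by
  obtain ⟨f, hfd, hfm, hf0, rfl⟩ := hx
  obtain ⟨g, hgd, hgm, hg0, hgdet, rfl⟩ := hy
  have h0mem : (0 : EuclideanSpace ℂ (Fin n)) ∈ ball (0 : EuclideanSpace ℂ (Fin n)) 1 :=
    mem_ball_self one_pos
  have hpY : p ∈ Y := hg0 ▸ hgm h0mem
  have hgda : DifferentiableAt ℂ g 0 := hgd.differentiableAt (isOpen_ball.mem_nhds h0mem)
  have hfda : DifferentiableAt ℂ f p := hfd.differentiableAt (hY.mem_nhds hpY)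
  have hfda' : DifferentiableAt ℂ f (g 0) := hg0 ▸ hfda
  have hcomp_d : DifferentiableOn ℂ (f ∘ g) (ball 0 1) := hfd.comp hgd hgm
  have hcomp_m : MapsTo (f ∘ g) (ball (0 : EuclideanSpace ℂ (Fin n)) 1) (ball 0 1) :=
    hfm.comp hgm
  have hcomp_0 : (f ∘ g) 0 = 0 := by rw [Function.comp_apply, hg0, hf0]
  have hsch := schwarz_det hcomp_d hcomp_m hcomp_0
  rw [fderiv_comp 0 hfda' hgda] at hsch
  have hdetmul : ((fderiv ℂ f (g 0)).comp (fderiv ℂ g 0)).det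
      = (fderiv ℂ f (g 0)).det * (fderiv ℂ g 0).det := by
    simp only [ContinuousLinearMap.det, ContinuousLinearMap.coe_comp]
    exact LinearMap.det_comp _ _
  rw [hdetmul, norm_mul, hg0] at hsch
  set a := ‖(fderiv ℂ f p).det‖
  set b := ‖(fderiv ℂ g 0).det‖
  have hb : 0 < b := norm_pos_iff.2 hgdet
  have ha : 0 ≤ a := norm_nonneg _
  have hab : 0 ≤ a * b := mul_nonneg ha hb.le
  have h2 : a ^ 2 * b ^ 2 ≤ 1 := by nlinarith
  have h3 : a ^ 2 ≤ 1 / b ^ 2 := (le_div_iff₀ (by positivity)).2 h2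
  simpa [one_div] using h3

lemma caraBall_eq (n : ℕ) (Y : Set (EuclideanSpace ℂ (Fin n)))
    (p : EuclideanSpace ℂ (Fin n)) : caraBall n Y p = sSup (caraSet n Y p) := rfl

lemma kobBall_eq (n : ℕ) (Y : Set (EuclideanSpace ℂ (Fin n)))
    (p : EuclideanSpace ℂ (Fin n)) : kobBall n Y p = sInf (kobSet n Y p) := rfl

lemma caraBall_le_kobBall {n : ℕ} {Y : Set (EuclideanSpace ℂ (Fin n))}
    {p : EuclideanSpace ℂ (Fin n)} (hY : IsOpen Y) (hp : p ∈ Y) :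
    caraBall n Y p ≤ kobBall n Y p := by
  rw [caraBall_eq, kobBall_eq]
  obtain ⟨y, hy⟩ := kobSet_nonempty hY hp
  refine le_csInf ⟨y, hy⟩ fun b hb => ?_
  exact Real.sSup_le (fun x hx => caraSet_le_kobSet hY hx hb) (kobSet_nonneg hb)

/-- bound for Carathéodory competitors -/
lemma caraSet_bddAbove {n : ℕ} {Y : Set (EuclideanSpace ℂ (Fin n))}
    {p : EuclideanSpace ℂ (Fin n)} {δ : ℝ} (hδ : 0 < δ) (hball : ball p δ ⊆ Y)
    {x : ℝ} (hx : x ∈ caraSet n Y p) :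
    x ≤ ((Nat.factorial n : ℝ) * (2 / δ) ^ n) ^ 2 := by
  obtain ⟨f, hfd, hfm, hf0, rfl⟩ := hx
  have hop : ‖fderiv ℂ f p‖ ≤ 2 * 1 / δ :=
    opnorm_fderiv_le' hδ (hfd.mono hball) (fun z hz => hfm (hball hz))
  rw [mul_one] at hop
  have hdet := det_norm_le (fderiv ℂ f p)
  have h1 : ‖(fderiv ℂ f p).det‖ ≤ (Nat.factorial n : ℝ) * (2 / δ) ^ n := by
    refine hdet.trans ?_
    have : ‖fderiv ℂ f p‖ ^ n ≤ (2 / δ) ^ n :=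
      pow_le_pow_left₀ (norm_nonneg _) hop n
    have hfac : (0:ℝ) ≤ (Nat.factorial n : ℝ) := by positivity
    nlinarith
  have h0 : (0:ℝ) ≤ ‖(fderiv ℂ f p).det‖ := norm_nonneg _
  nlinarith

/-- lower bound for Kobayashi competitors of a bounded domain -/
lemma kobSet_lower {n : ℕ} {Y : Set (EuclideanSpace ℂ (Fin n))}
    {p : EuclideanSpace ℂ (Fin n)} {R : ℝ} (hR : 0 < R)
    (hsub : Y ⊆ ball (0 : EuclideanSpace ℂ (Fin n)) R)
    {y : ℝ} (hy : y ∈ kobSet n Y p) :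
    (((Nat.factorial n : ℝ) * (2 * R) ^ n) ^ 2)⁻¹ ≤ y := by
  obtain ⟨g, hgd, hgm, hg0, hgdet, rfl⟩ := hy
  have hop : ‖fderiv ℂ g 0‖ ≤ 2 * R / 1 :=
    opnorm_fderiv_le' one_pos hgd (fun z hz => hsub (hgm hz))
  rw [div_one] at hop
  have hdet := det_norm_le (fderiv ℂ g 0)
  have h1 : ‖(fderiv ℂ g 0).det‖ ≤ (Nat.factorial n : ℝ) * (2 * R) ^ n := by
    refine hdet.trans ?_
    have : ‖fderiv ℂ g 0‖ ^ n ≤ (2 * R) ^ n :=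
      pow_le_pow_left₀ (norm_nonneg _) hop n
    have hfac : (0:ℝ) ≤ (Nat.factorial n : ℝ) := by positivity
    nlinarith
  have hfacpos : (0:ℝ) < (Nat.factorial n : ℝ) * (2 * R) ^ n := by
    have : (0:ℝ) < (Nat.factorial n : ℝ) := by
      exact_mod_cast Nat.factorial_pos n
    positivity
  have hbpos : (0:ℝ) < ‖(fderiv ℂ g 0).det‖ := norm_pos_iff.2 hgdet
  apply inv_anti₀
  · positivity
  · nlinarith

lemma tendstoUniformlyOn_of_lipschitz {X Y : Type*} [PseudoMetricSpace X] [PseudoMetricSpace Y]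
    {K : Set X} (hK : IsCompact K) (𝒰 : Ultrafilter ℕ) {G : ℕ → X → Y} {g : X → Y}
    {L : ℝ} (hL : 0 ≤ L) {S : Set ℕ} (hS : S ∈ 𝒰)
    (hLip : ∀ j ∈ S, ∀ x ∈ K, ∀ y ∈ K, dist (G j x) (G j y) ≤ L * dist x y)
    (hpt : ∀ x ∈ K, Tendsto (fun j => G j x) (𝒰 : Filter ℕ) (nhds (g x))) :
    TendstoUniformlyOn G g (𝒰 : Filter ℕ) K := by
  rw [Metric.tendstoUniformlyOn_iff]
  intro ε hε
  set δ : ℝ := ε / 4 / (L + 1) with hδ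
  have hδpos : 0 < δ := by positivity
  have hLδ : L * δ ≤ ε / 4 := by
    have h1 : L * δ = L * (ε / 4) / (L + 1) := by rw [hδ]; ring
    rw [h1, div_le_iff₀ (by positivity : (0:ℝ) < L + 1)]
    nlinarith
  have hcover : K ⊆ ⋃ x ∈ K, ball x δ := fun x hx =>
    mem_biUnion hx (mem_ball_self hδpos)
  obtain ⟨t, htK, htfin, htcover⟩ :=
    hK.elim_finite_subcover_image (fun x _ => isOpen_ball) hcover
  have hgL : ∀ x ∈ K, ∀ y ∈ K, dist (g x) (g y) ≤ L * dist x y := by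
    intro x hx y hy
    have h1 : Tendsto (fun j => dist (G j x) (G j y)) (𝒰 : Filter ℕ)
        (nhds (dist (g x) (g y))) := (hpt x hx).dist (hpt y hy)
    refine le_of_tendsto h1 ?_
    filter_upwards [hS] with j hj
    exact hLip j hj x hx y hy
  have hnet : ∀ᶠ j in (𝒰 : Filter ℕ), ∀ x ∈ t, dist (g x) (G j x) < ε / 4 := by
    rw [htfin.eventually_all]
    intro x hxt
    have h1 := (hpt x (htK hxt)).eventually (Metric.ball_mem_nhds (g x) (by positivity : (0:ℝ) < ε/4))
    filter_upwards [h1] with j hj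
    have hj' : dist (G j x) (g x) < ε / 4 := by simpa [mem_ball] using hj
    rw [dist_comm]
    exact hj' 
  filter_upwards [hnet, hS] with j hjnet hjS
  intro x hx
  obtain ⟨y, hyt, hyx⟩ : ∃ y ∈ t, x ∈ ball y δ := by
    have := htcover hx
    simpa using this
  have hyK : y ∈ K := htK hyt
  have hd1 : dist (g x) (g y) ≤ L * δ := by
    refine (hgL x hx y hyK).trans ?_
    have : dist x y < δ := by rwa [mem_ball] at hyx
    nlinarith [dist_nonneg (x := x) (y := y)]
  have hd3 : dist (G j y) (G j x) ≤ L * δ := by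
    refine (hLip j hjS y hyK x hx).trans ?_
    have : dist y x < δ := by rw [dist_comm]; rwa [mem_ball] at hyx
    nlinarith [dist_nonneg (x := y) (y := x)]
  calc dist (g x) (G j x)
      ≤ dist (g x) (g y) + dist (g y) (G j y) + dist (G j y) (G j x) :=
        dist_triangle4 _ _ _ _
    _ < ε := by
        have := hjnet y hyt
        linarith

lemma det_continuous (n : ℕ) :
    Continuous fun A : EuclideanSpace ℂ (Fin n) →L[ℂ] EuclideanSpace ℂ (Fin n) => A.det := by
  classical
  set b := (EuclideanSpace.basisFun (Fin n) ℂ).toBasis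
  have hrw : (fun A : EuclideanSpace ℂ (Fin n) →L[ℂ] EuclideanSpace ℂ (Fin n) => A.det)
      = fun A => ((LinearMap.toMatrix b b)
        ((ContinuousLinearMap.coeLM ℂ) A)).det := by
    funext A
    exact (LinearMap.det_toMatrix b _).symm
  rw [hrw]
  haveI : FiniteDimensional ℂ (EuclideanSpace ℂ (Fin n) →L[ℂ] EuclideanSpace ℂ (Fin n)) :=
    inferInstance
  have hlin : Continuous fun A : EuclideanSpace ℂ (Fin n) →L[ℂ] EuclideanSpace ℂ (Fin n) =>
      (LinearMap.toMatrix b b) ((ContinuousLinearMap.coeLM ℂ) A) := by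
    have h2 := LinearMap.continuous_of_finiteDimensional
      (((LinearMap.toMatrix b b).toLinearMap).comp (ContinuousLinearMap.coeLM ℂ))
    exact h2
  exact hlin.matrix_det

lemma montel {n : ℕ} {Ms : ℕ → Set (EuclideanSpace ℂ (Fin n))}
    (hmono : Monotone Ms) (hopen : ∀ j, IsOpen (Ms j))
    {M : Set (EuclideanSpace ℂ (Fin n))} (hM : M = ⋃ j, Ms j)
    {F : ℕ → EuclideanSpace ℂ (Fin n) → EuclideanSpace ℂ (Fin n)}
    (hFd : ∀ j, DifferentiableOn ℂ (F j) (Ms j))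
    (hFm : ∀ j, MapsTo (F j) (Ms j) (ball 0 1))
    {z0 : EuclideanSpace ℂ (Fin n)} (hz0 : z0 ∈ M)
    (hF0 : ∀ j, F j z0 = 0)
    {a : ℕ → ℝ} (hva : ∀ j, a j ≤ ‖(fderiv ℂ (F j) z0).det‖ ^ 2)
    {A : ℝ} (halim : Tendsto a atTop (nhds A)) :
    ∃ f : EuclideanSpace ℂ (Fin n) → EuclideanSpace ℂ (Fin n),
      DifferentiableOn ℂ f M ∧ (∀ x ∈ M, ‖f x‖ ≤ 1) ∧ f z0 = 0 ∧
      A ≤ ‖(fderiv ℂ f z0).det‖ ^ 2 := by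
  classical
  set 𝒰 : Ultrafilter ℕ := Ultrafilter.of atTop with h𝒰
  have hUle : (𝒰 : Filter ℕ) ≤ atTop := Ultrafilter.of_le _
  have hMsub : ∀ j, Ms j ⊆ M := by
    intro j
    rw [hM]
    exact subset_iUnion Ms j
  -- geometric setup around each point
  have hgeo : ∀ c ∈ M, ∃ ρ : ℝ, 0 < ρ ∧ ∃ j₀, closedBall c (3*ρ) ⊆ Ms j₀ := by
    intro c hc
    rw [hM, mem_iUnion] at hc
    obtain ⟨j₁, hj₁⟩ := hc
    obtain ⟨r, hr, hball⟩ := Metric.isOpen_iff.1 (hopen j₁) c hj₁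
    refine ⟨r/4, by positivity, j₁, ?_⟩
    intro y hy
    apply hball
    rw [mem_closedBall] at hy
    rw [mem_ball]
    calc dist y c ≤ 3 * (r/4) := hy
      _ < r := by linarith
  -- pointwise limits of the functions
  have hptex : ∀ x ∈ M, ∃ y, Tendsto (fun j => F j x) (𝒰 : Filter ℕ) (nhds y) := by
    intro x hx
    rw [hM, mem_iUnion] at hx
    obtain ⟨j₁, hj₁⟩ := hx
    have hev : ∀ᶠ j in (𝒰 : Filter ℕ), F j x ∈ closedBall (0:EuclideanSpace ℂ (Fin n)) 1 := by
      refine Eventually.filter_mono hUle ?_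
      filter_upwards [eventually_ge_atTop j₁] with j hj
      exact ball_subset_closedBall (hFm j (hmono hj hj₁))
    have hle : (𝒰.map (fun j => F j x) : Filter (EuclideanSpace ℂ (Fin n))) ≤ Filter.principal (closedBall (0:EuclideanSpace ℂ (Fin n)) 1) := by
      rw [le_principal_iff]
      exact hev
    obtain ⟨y, _, hy⟩ := (isCompact_closedBall (0:EuclideanSpace ℂ (Fin n)) 1).ultrafilter_le_nhds
      (𝒰.map (fun j => F j x)) hle
    exact ⟨y, hy⟩
  set f : EuclideanSpace ℂ (Fin n) → EuclideanSpace ℂ (Fin n) := fun x => limUnder (𝒰 : Filter ℕ) (fun j => F j x) with hf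
  have hpt : ∀ x ∈ M, Tendsto (fun j => F j x) (𝒰 : Filter ℕ) (nhds (f x)) := by
    intro x hx
    exact tendsto_nhds_limUnder (hptex x hx)
  -- derivative bounds and pointwise limits of derivatives
  have hdbound : ∀ c ∈ M, ∀ ρ : ℝ, 0 < ρ → ∀ j₀, closedBall c (3*ρ) ⊆ Ms j₀ →
      ∀ j ≥ j₀, ∀ x ∈ closedBall c (2*ρ), ‖fderiv ℂ (F j) x‖ ≤ 2 / ρ := by
    intro c _ ρ hρ j₀ hsub j hj x hx
    have hsubj : closedBall c (3*ρ) ⊆ Ms j := hsub.trans (hmono hj)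
    have hballx : ball x ρ ⊆ closedBall c (3*ρ) := by
      intro y hy
      rw [mem_ball] at hy
      rw [mem_closedBall] at hx ⊢
      calc dist y c ≤ dist y x + dist x c := dist_triangle _ _ _
        _ ≤ ρ + 2 * ρ := by push_cast at *; linarith
        _ = 3 * ρ := by ring
    have := opnorm_fderiv_le' (w := (0:EuclideanSpace ℂ (Fin n))) (r := 1) hρ
      ((hFd j).mono (hballx.trans hsubj))
      (fun y hy => hFm j (hsubj (hballx hy)))
    calc ‖fderiv ℂ (F j) x‖ ≤ 2 * 1 / ρ := this
      _ = 2 / ρ := by ring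
  have hptex' : ∀ x ∈ M, ∃ D, Tendsto (fun j => fderiv ℂ (F j) x) (𝒰 : Filter ℕ) (nhds D) := by
    intro x hx
    obtain ⟨ρ, hρ, j₀, hsub⟩ := hgeo x hx
    have hxcb : x ∈ closedBall x (2*ρ) := mem_closedBall_self (by positivity)
    have hev : ∀ᶠ j in (𝒰 : Filter ℕ),
        fderiv ℂ (F j) x ∈ closedBall (0 : EuclideanSpace ℂ (Fin n) →L[ℂ] EuclideanSpace ℂ (Fin n)) (2/ρ) := by
      refine Eventually.filter_mono hUle ?_
      filter_upwards [eventually_ge_atTop j₀] with j hj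
      rw [mem_closedBall, dist_zero_right]
      exact hdbound x hx ρ hρ j₀ hsub j hj x hxcb
    have hle : (𝒰.map (fun j => fderiv ℂ (F j) x) : Filter (EuclideanSpace ℂ (Fin n) →L[ℂ] EuclideanSpace ℂ (Fin n)))
        ≤ Filter.principal (closedBall (0 : EuclideanSpace ℂ (Fin n) →L[ℂ] EuclideanSpace ℂ (Fin n)) (2/ρ)) := by
      rw [le_principal_iff]
      exact hev
    obtain ⟨D, _, hD⟩ := (isCompact_closedBall (0 : EuclideanSpace ℂ (Fin n) →L[ℂ] EuclideanSpace ℂ (Fin n)) (2/ρ)).ultrafilter_le_nhds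
      (𝒰.map _) hle
    exact ⟨D, hD⟩
  set g' : EuclideanSpace ℂ (Fin n) → (EuclideanSpace ℂ (Fin n) →L[ℂ] EuclideanSpace ℂ (Fin n)) := fun x => limUnder (𝒰 : Filter ℕ) (fun j => fderiv ℂ (F j) x)
    with hg'
  have hpt' : ∀ x ∈ M, Tendsto (fun j => fderiv ℂ (F j) x) (𝒰 : Filter ℕ) (nhds (g' x)) := by
    intro x hx
    exact tendsto_nhds_limUnder (hptex' x hx)
  -- the main per-point derivative statement
  have hfderiv : ∀ c ∈ M, HasFDerivAt f (g' c) c := by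
    intro c hc
    obtain ⟨ρ, hρ, j₀, hsub⟩ := hgeo c hc
    have hcb2M : closedBall c (2*ρ) ⊆ M := by
      refine subset_trans ?_ (hMsub j₀)
      refine subset_trans ?_ hsub
      exact closedBall_subset_closedBall (by linarith)
    have hballcb : ∀ x ∈ closedBall c ρ, ball x ρ ⊆ closedBall c (2*ρ) := by
      intro x hx y hy
      rw [mem_ball] at hy
      rw [mem_closedBall] at hx ⊢
      calc dist y c ≤ dist y x + dist x c := dist_triangle _ _ _
        _ ≤ ρ + ρ := by linarith
        _ = 2 * ρ := by ring
    have hdiffat : ∀ j ≥ j₀, ∀ x ∈ closedBall c (2*ρ), DifferentiableAt ℂ (F j) x := by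
      intro j hj x hx
      refine (hFd j).differentiableAt ((hopen j).mem_nhds ?_)
      refine (hsub.trans (hmono hj)) (closedBall_subset_closedBall (by linarith) hx)
    -- uniform convergence of F on closedBall c (2ρ)
    have hS : {j | j₀ ≤ j} ∈ (𝒰 : Filter ℕ) := hUle (eventually_ge_atTop j₀)
    have hLip : ∀ j ∈ {j | j₀ ≤ j}, ∀ x ∈ closedBall c (2*ρ), ∀ y ∈ closedBall c (2*ρ),
        dist (F j x) (F j y) ≤ (2/ρ) * dist x y := by
      intro j hj x hx y hy
      rw [dist_eq_norm, dist_eq_norm]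
      exact (convex_closedBall c (2*ρ)).norm_image_sub_le_of_norm_fderiv_le
        (fun w hw => hdiffat j hj w hw)
        (fun w hw => hdbound c hc ρ hρ j₀ hsub j hj w hw) hy hx
    have hUF : TendstoUniformlyOn F f (𝒰 : Filter ℕ) (closedBall c (2*ρ)) :=
      tendstoUniformlyOn_of_lipschitz (isCompact_closedBall c (2*ρ)) 𝒰
        (by positivity : (0:ℝ) ≤ 2/ρ) hS hLip (fun x hx => hpt x (hcb2M hx))
    -- uniform convergence of the derivatives on closedBall c ρ
    have hUF' : TendstoUniformlyOn (fun j x => fderiv ℂ (F j) x) g' (𝒰 : Filter ℕ)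
        (closedBall c ρ) := by
      rw [Metric.tendstoUniformlyOn_iff]
      intro ε hε
      set ε' : ℝ := ρ * ε / 6 with hε'
      have hε'pos : 0 < ε' := by positivity
      have hT : ∀ᶠ j in (𝒰 : Filter ℕ), ∀ x ∈ closedBall c (2*ρ),
          dist (f x) (F j x) < ε' := (Metric.tendstoUniformlyOn_iff.1 hUF) ε' hε'pos
      filter_upwards [hT, hS] with j hj hjge
      intro x hx
      have hxM : x ∈ M := hcb2M (closedBall_subset_closedBall (by linarith) hx)
      have hkey : ∀ᶠ k in (𝒰 : Filter ℕ),
          fderiv ℂ (F k) x ∈ closedBall (fderiv ℂ (F j) x) (5*ε'/ρ) := by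
        filter_upwards [hT, hS] with k hk hkge
        set G : EuclideanSpace ℂ (Fin n) → EuclideanSpace ℂ (Fin n) := fun y => F j y - F k y with hG
        have hGd : DifferentiableOn ℂ G (ball x ρ) := by
          intro y hy
          exact ((hdiffat j hjge y (hballcb x hx hy)).sub
            (hdiffat k hkge y (hballcb x hx hy))).differentiableWithinAt
        have hGm : MapsTo G (ball x ρ) (ball (G x) (5*ε')) := by
          intro y hy
          rw [mem_ball]
          have hycb := hballcb x hx hy
          have hxcb : x ∈ closedBall c (2*ρ) := closedBall_subset_closedBall (by linarith) hx
          have h1 := hj y hycb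
          have h2 := hk y hycb
          have h3 := hj x hxcb
          have h4 := hk x hxcb
          have : dist (G y) (G x) ≤ dist (f y) (F j y) + dist (f y) (F k y)
              + dist (f x) (F j x) + dist (f x) (F k x) := by
            rw [hG]
            simp only [dist_eq_norm]
            have : F j y - F k y - (F j x - F k x)
                = -((f y - F j y)) + (f y - F k y) + (f x - F j x) - (f x - F k x) := by abel
            rw [this]
            calc ‖-(f y - F j y) + (f y - F k y) + (f x - F j x) - (f x - F k x)‖
                ≤ ‖-(f y - F j y) + (f y - F k y) + (f x - F j x)‖ + ‖f x - F k x‖ :=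
                  norm_sub_le _ _
              _ ≤ ‖-(f y - F j y) + (f y - F k y)‖ + ‖f x - F j x‖ + ‖f x - F k x‖ := by
                  have := norm_add_le (-(f y - F j y) + (f y - F k y)) (f x - F j x)
                  linarith
              _ ≤ ‖f y - F j y‖ + ‖f y - F k y‖ + ‖f x - F j x‖ + ‖f x - F k x‖ := by
                  have h5 := norm_add_le (-(f y - F j y)) (f y - F k y)
                  rw [norm_neg] at h5
                  linarith
          linarith
        have hop := opnorm_fderiv_le hρ hGd hGm
        have hGder : fderiv ℂ G x = fderiv ℂ (F j) x - fderiv ℂ (F k) x := by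
          rw [hG]
          exact fderiv_sub (hdiffat j hjge x (closedBall_subset_closedBall (by linarith) hx))
            (hdiffat k hkge x (closedBall_subset_closedBall (by linarith) hx))
        rw [mem_closedBall, dist_eq_norm, ← norm_neg]
        have : -(fderiv ℂ (F k) x - fderiv ℂ (F j) x) = fderiv ℂ G x := by
          rw [hGder]; abel
        rw [this]
        exact hop
      have hmem : g' x ∈ closedBall (fderiv ℂ (F j) x) (5*ε'/ρ) :=
        isClosed_closedBall.mem_of_tendsto (hpt' x hxM) hkey
      rw [mem_closedBall] at hmem
      calc dist (g' x) (fderiv ℂ (F j) x) ≤ 5*ε'/ρ := hmem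
        _ = 5 * ε / 6 := by rw [hε']; field_simp
        _ < ε := by linarith
    -- apply the uniform limits theorem to the shifted family
    have hshift : ∀ᶠ j in (𝒰 : Filter ℕ), max j j₀ = j := by
      refine Eventually.filter_mono hUle ?_
      filter_upwards [eventually_ge_atTop j₀] with j hj
      exact max_eq_left hj
    have hf' : TendstoLocallyUniformlyOn (fun j x => fderiv ℂ (F (max j j₀)) x) g'
        (𝒰 : Filter ℕ) (ball c ρ) := by
      refine ((hUF'.congr ?_).mono ball_subset_closedBall).tendstoLocallyUniformlyOn
      filter_upwards [hshift] with j hj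
      intro x _
      rw [hj]
    have hfg : ∀ x ∈ ball c ρ, Tendsto (fun j => F (max j j₀) x) (𝒰 : Filter ℕ)
        (nhds (f x)) := by
      intro x hx
      have hxM : x ∈ M := hcb2M (ball_subset_closedBall.trans
        (closedBall_subset_closedBall (by linarith)) hx)
      refine (hpt x hxM).congr' ?_
      filter_upwards [hshift] with j hj
      rw [hj]
    have hhd : ∀ j, ∀ x ∈ ball c ρ, HasFDerivAt (F (max j j₀))
        (fderiv ℂ (F (max j j₀)) x) x := by
      intro j x hx
      exact (hdiffat (max j j₀) (le_max_right j j₀) x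
        (ball_subset_closedBall.trans (closedBall_subset_closedBall (by linarith)) hx)).hasFDerivAt
    have := hasFDerivAt_of_tendstoLocallyUniformlyOn isOpen_ball hf' hhd hfg
      (mem_ball_self hρ)
    exact this
  -- assemble
  refine ⟨f, ?_, ?_, ?_, ?_⟩
  · intro x hx
    exact ((hfderiv x hx).differentiableAt).differentiableWithinAt
  · intro x hx
    have hx' := hx
    rw [hM, mem_iUnion] at hx'
    obtain ⟨j₁, hj₁⟩ := hx'
    have hev : ∀ᶠ j in (𝒰 : Filter ℕ), F j x ∈ closedBall (0:EuclideanSpace ℂ (Fin n)) 1 := by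
      refine Eventually.filter_mono hUle ?_
      filter_upwards [eventually_ge_atTop j₁] with j hj
      exact ball_subset_closedBall (hFm j (hmono hj hj₁))
    have := isClosed_closedBall.mem_of_tendsto (hpt x hx) hev
    rwa [mem_closedBall, dist_zero_right] at this
  · have h1 : Tendsto (fun j => F j z0) (𝒰 : Filter ℕ) (nhds (0:EuclideanSpace ℂ (Fin n))) := by
      have : (fun j => F j z0) = fun _ => (0:EuclideanSpace ℂ (Fin n)) := by funext j; exact hF0 j
      rw [this]
      exact tendsto_const_nhds
    exact tendsto_nhds_unique (hpt z0 hz0) h1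
  · have hfd0 : fderiv ℂ f z0 = g' z0 := (hfderiv z0 hz0).fderiv
    rw [hfd0]
    have h2 : Tendsto (fun j => ‖(fderiv ℂ (F j) z0).det‖ ^ 2) (𝒰 : Filter ℕ)
        (nhds (‖(g' z0).det‖ ^ 2)) := by
      have h3 := ((det_continuous n).tendsto (g' z0)).comp (hpt' z0 hz0)
      exact (h3.norm).pow 2
    exact le_of_tendsto_of_tendsto' (halim.mono_left hUle) h2 hva

end Stmt16Aux

open Stmt16Aux

theorem stmt_16 (n : ℕ)
    (Ms : ℕ → Set (EuclideanSpace ℂ (Fin n)))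
    (hmono : Monotone Ms) (hopen : ∀ j, IsOpen (Ms j))
    (M : Set (EuclideanSpace ℂ (Fin n))) (hM : M = ⋃ j, Ms j)
    (hconn : IsConnected M)
    (Ω : Set (EuclideanSpace ℂ (Fin n)))
    (hΩo : IsOpen Ω) (hΩb : Bornology.IsBounded Ω)
    (ψ φ : ℕ → EuclideanSpace ℂ (Fin n) → EuclideanSpace ℂ (Fin n))
    (hψd : ∀ j, DifferentiableOn ℂ (ψ j) (Ms j))
    (hψm : ∀ j, MapsTo (ψ j) (Ms j) Ω)
    (hφd : ∀ j, DifferentiableOn ℂ (φ j) Ω)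
    (hφm : ∀ j, MapsTo (φ j) Ω (Ms j))
    (hlr : ∀ j, ∀ z ∈ Ms j, φ j (ψ j z) = z)
    (hrl : ∀ j, ∀ w ∈ Ω, ψ j (φ j w) = w)
    (z0 : EuclideanSpace ℂ (Fin n)) (hz0 : z0 ∈ Ms 0)
    (hck : Tendsto (fun j => caraBall n Ω (ψ j z0) / kobBall n Ω (ψ j z0))
      atTop (nhds 1))
    (hKpos : 0 < kobBall n M z0) :
    caraBall n M z0 = kobBall n M z0 := by
  classical
  have hMopen : IsOpen M := hM ▸ isOpen_iUnion hopen
  have hMsub : ∀ j, Ms j ⊆ M := fun j => hM ▸ subset_iUnion Ms j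
  have hz0M : z0 ∈ M := hMsub 0 hz0
  have hz0j : ∀ j, z0 ∈ Ms j := fun j => hmono (Nat.zero_le j) hz0
  have hpj : ∀ j, ψ j z0 ∈ Ω := fun j => hψm j (hz0j j)
  have hupper : caraBall n M z0 ≤ kobBall n M z0 := caraBall_le_kobBall hMopen hz0M
  obtain ⟨δ, hδ, hδball⟩ := Metric.isOpen_iff.1 (hopen 0) z0 hz0
  have hCbdd : ∀ Y : Set (EuclideanSpace ℂ (Fin n)), Ms 0 ⊆ Y →
      BddAbove (caraSet n Y z0) := by
    intro Y hY
    exact ⟨_, fun x hx => caraSet_bddAbove hδ (hδball.trans hY) hx⟩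
  obtain ⟨R0, hR0⟩ := hΩb.subset_closedBall 0
  set R : ℝ := |R0| + 1 with hR
  have hRpos : 0 < R := by positivity
  have hΩR : Ω ⊆ ball (0 : EuclideanSpace ℂ (Fin n)) R := by
    intro y hy
    have h1 := hR0 hy
    rw [mem_closedBall] at h1
    rw [mem_ball]
    calc dist y 0 ≤ R0 := h1
      _ ≤ |R0| := le_abs_self R0
      _ < R := by rw [hR]; linarith
  have hKΩpos : ∀ q ∈ Ω, 0 < kobBall n Ω q := by
    intro q hq
    have h1 : (((Nat.factorial n : ℝ) * (2 * R) ^ n) ^ 2)⁻¹ ≤ kobBall n Ω q := by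
      rw [kobBall_eq]
      exact le_csInf (kobSet_nonempty hΩo hq) (fun y hy => kobSet_lower hRpos hΩR hy)
    refine lt_of_lt_of_le ?_ h1
    have h2 : (0:ℝ) < (Nat.factorial n : ℝ) := by exact_mod_cast Nat.factorial_pos n
    positivity
  set KM := kobBall n M z0 with hKM
  have hkey : ∀ j, (caraBall n Ω (ψ j z0) / kobBall n Ω (ψ j z0)) * KM
      ≤ caraBall n (Ms j) z0 := by
    intro j
    set p := ψ j z0 with hp
    have hψda : DifferentiableAt ℂ (ψ j) z0 :=
      (hψd j).differentiableAt ((hopen j).mem_nhds (hz0j j))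
    have hφda : DifferentiableAt ℂ (φ j) p :=
      (hφd j).differentiableAt (hΩo.mem_nhds (hpj j))
    have hiddet : (fderiv ℂ (φ j) p).det * (fderiv ℂ (ψ j) z0).det = 1 := by
      have hev : (fun z => φ j (ψ j z)) =ᶠ[nhds z0] (fun z => z) := by
        filter_upwards [(hopen j).mem_nhds (hz0j j)] with z hz
        exact hlr j z hz
      have h1 : fderiv ℂ (fun z => φ j (ψ j z)) z0
          = fderiv ℂ (fun z : EuclideanSpace ℂ (Fin n) => z) z0 := hev.fderiv_eq
      have h2 : fderiv ℂ (φ j ∘ ψ j) z0 = (fderiv ℂ (φ j) p).comp (fderiv ℂ (ψ j) z0) :=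
        fderiv_comp z0 (hp ▸ hφda) hψda
      have h3 : (fderiv ℂ (φ j) p).comp (fderiv ℂ (ψ j) z0)
          = ContinuousLinearMap.id ℂ (EuclideanSpace ℂ (Fin n)) := by
        rw [← h2]
        have h5 : (φ j ∘ ψ j) = fun z => φ j (ψ j z) := rfl
        rw [h5, h1, fderiv_id']
      have h4 := congrArg ContinuousLinearMap.det h3
      rw [show ((fderiv ℂ (φ j) p).comp (fderiv ℂ (ψ j) z0)).det
          = (fderiv ℂ (φ j) p).det * (fderiv ℂ (ψ j) z0).det by
        simp only [ContinuousLinearMap.det, ContinuousLinearMap.coe_comp]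
        exact LinearMap.det_comp _ _] at h4
      rw [h4]
      simp only [ContinuousLinearMap.det, ContinuousLinearMap.coe_id]
      exact LinearMap.det_id
    set D : ℝ := ‖(fderiv ℂ (ψ j) z0).det‖ with hD
    have hDpos : 0 < D := by
      rw [hD, norm_pos_iff]
      intro h0
      rw [h0, mul_zero] at hiddet
      exact one_ne_zero hiddet.symm
    have hφdetne : (fderiv ℂ (φ j) p).det ≠ 0 := by
      intro h0
      rw [h0, zero_mul] at hiddet
      exact one_ne_zero hiddet.symm
    have hDφ : ‖(fderiv ℂ (φ j) p).det‖ = D⁻¹ := by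
      have h6 := congrArg norm hiddet
      rw [norm_mul, norm_one, ← hD] at h6
      rw [inv_eq_one_div, eq_div_iff hDpos.ne']
      exact h6
    have hCtrans : D^2 * caraBall n Ω p ≤ caraBall n (Ms j) z0 := by
      have hCnn : (0:ℝ) ≤ caraBall n (Ms j) z0 := by
        rw [caraBall_eq]
        refine Real.sSup_nonneg (fun x hx => ?_)
        obtain ⟨f, _, _, _, rfl⟩ := hx
        positivity
      have hstep : caraBall n Ω p ≤ caraBall n (Ms j) z0 / D^2 := by
        rw [caraBall_eq]
        refine Real.sSup_le (fun x hx => ?_) (by positivity)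
        obtain ⟨f, hfd, hfm, hf0, rfl⟩ := hx
        have hfda : DifferentiableAt ℂ f p := hfd.differentiableAt (hΩo.mem_nhds (hpj j))
        have hmem : ‖(fderiv ℂ f p).det‖^2 * D^2 ∈ caraSet n (Ms j) z0 := by
          refine ⟨fun z => f (ψ j z), hfd.comp (hψd j) (hψm j),
            fun z hz => hfm ((hψm j) hz), hf0, ?_⟩
          have hcomp : fderiv ℂ (fun z => f (ψ j z)) z0
              = (fderiv ℂ f p).comp (fderiv ℂ (ψ j) z0) :=
            fderiv_comp z0 (hp ▸ hfda) hψda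
          rw [hcomp]
          rw [show ((fderiv ℂ f p).comp (fderiv ℂ (ψ j) z0)).det
              = (fderiv ℂ f p).det * (fderiv ℂ (ψ j) z0).det by
            simp only [ContinuousLinearMap.det, ContinuousLinearMap.coe_comp]
            exact LinearMap.det_comp _ _]
          rw [norm_mul, mul_pow, ← hD]
        have hle : ‖(fderiv ℂ f p).det‖^2 * D^2 ≤ caraBall n (Ms j) z0 := by
          rw [caraBall_eq]
          exact le_csSup (hCbdd (Ms j) (hmono (Nat.zero_le j))) hmem
        rw [le_div_iff₀ (by positivity : (0:ℝ) < D^2)]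
        exact hle
      calc D^2 * caraBall n Ω p ≤ D^2 * (caraBall n (Ms j) z0 / D^2) :=
            mul_le_mul_of_nonneg_left hstep (by positivity)
        _ = caraBall n (Ms j) z0 := by field_simp
    have hKtrans : KM ≤ D^2 * kobBall n Ω p := by
      have hstep : KM / D^2 ≤ kobBall n Ω p := by
        rw [kobBall_eq]
        refine le_csInf (kobSet_nonempty hΩo (hpj j)) (fun y hy => ?_)
        obtain ⟨g, hgd, hgm, hg0, hgdet, rfl⟩ := hy
        have hgda : DifferentiableAt ℂ g 0 :=
          hgd.differentiableAt (isOpen_ball.mem_nhds (mem_ball_self one_pos))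
        have hg2d : DifferentiableOn ℂ (fun z => φ j (g z)) (ball 0 1) :=
          (hφd j).comp hgd hgm
        have hg2m : MapsTo (fun z => φ j (g z)) (ball (0:EuclideanSpace ℂ (Fin n)) 1) M :=
          fun z hz => hMsub j (hφm j (hgm hz))
        have hg20 : (fun z => φ j (g z)) 0 = z0 := by
          simp only
          rw [hg0, hp]
          exact hlr j z0 (hz0j j)
        have hcomp : fderiv ℂ (fun z => φ j (g z)) 0
            = (fderiv ℂ (φ j) p).comp (fderiv ℂ g 0) := by
          have h7 : DifferentiableAt ℂ (φ j) (g 0) := by rw [hg0]; exact hφda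
          have h8 := fderiv_comp 0 h7 hgda
          rw [hg0] at h8
          exact h8
        have hdet2 : (fderiv ℂ (fun z => φ j (g z)) 0).det
            = (fderiv ℂ (φ j) p).det * (fderiv ℂ g 0).det := by
          rw [hcomp]
          simp only [ContinuousLinearMap.det, ContinuousLinearMap.coe_comp]
          exact LinearMap.det_comp _ _
        have hdet2ne : (fderiv ℂ (fun z => φ j (g z)) 0).det ≠ 0 := by
          rw [hdet2]
          exact mul_ne_zero hφdetne hgdet
        have hmem : (‖(fderiv ℂ (fun z => φ j (g z)) 0).det‖^2)⁻¹ ∈ kobSet n M z0 :=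
          ⟨fun z => φ j (g z), hg2d, hg2m, hg20, hdet2ne, rfl⟩
        have hKMle : KM ≤ (‖(fderiv ℂ (fun z => φ j (g z)) 0).det‖^2)⁻¹ := by
          rw [hKM, kobBall_eq]
          exact csInf_le ⟨0, fun y hy => kobSet_nonneg hy⟩ hmem
        have hval : (‖(fderiv ℂ (fun z => φ j (g z)) 0).det‖^2)⁻¹
            = D^2 * (‖(fderiv ℂ g 0).det‖^2)⁻¹ := by
          rw [hdet2, norm_mul, hDφ, mul_pow]
          rw [mul_inv]
          have h8 : ((D⁻¹)^2)⁻¹ = D^2 := by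
            rw [← inv_pow, inv_inv]
          rw [h8]
        rw [hval] at hKMle
        rw [div_le_iff₀ (by positivity : (0:ℝ) < D^2)]
        calc KM ≤ D^2 * (‖(fderiv ℂ g 0).det‖^2)⁻¹ := hKMle
          _ = (‖(fderiv ℂ g 0).det‖^2)⁻¹ * D^2 := mul_comm _ _
      calc KM = (KM / D^2) * D^2 := by field_simp
        _ ≤ kobBall n Ω p * D^2 :=
            mul_le_mul_of_nonneg_right hstep (by positivity)
        _ = D^2 * kobBall n Ω p := mul_comm _ _
    have hCΩnn : (0:ℝ) ≤ caraBall n Ω p := by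
      rw [caraBall_eq]
      refine Real.sSup_nonneg (fun x hx => ?_)
      obtain ⟨f, _, _, _, rfl⟩ := hx
      positivity
    have hrnn : (0:ℝ) ≤ caraBall n Ω p / kobBall n Ω p := by
      have := hKΩpos p (hpj j)
      positivity
    calc (caraBall n Ω p / kobBall n Ω p) * KM
        ≤ (caraBall n Ω p / kobBall n Ω p) * (D^2 * kobBall n Ω p) :=
          mul_le_mul_of_nonneg_left hKtrans hrnn
      _ = D^2 * ((caraBall n Ω p / kobBall n Ω p) * kobBall n Ω p) := by ring
      _ = D^2 * caraBall n Ω p := by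
          rw [div_mul_cancel₀ _ (hKΩpos p (hpj j)).ne']
      _ ≤ caraBall n (Ms j) z0 := hCtrans
  -- choose near-optimal competitors
  have hchoice : ∀ j, ∃ F : EuclideanSpace ℂ (Fin n) → EuclideanSpace ℂ (Fin n),
      DifferentiableOn ℂ F (Ms j) ∧ MapsTo F (Ms j) (ball 0 1) ∧ F z0 = 0 ∧
      (caraBall n Ω (ψ j z0) / kobBall n Ω (ψ j z0)) * KM - 1/((j:ℝ)+1)
        ≤ ‖(fderiv ℂ F z0).det‖^2 := by
    intro j
    have hlt : (caraBall n Ω (ψ j z0) / kobBall n Ω (ψ j z0)) * KM - 1/((j:ℝ)+1)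
        < caraBall n (Ms j) z0 := by
      refine lt_of_lt_of_le ?_ (hkey j)
      have : (0:ℝ) < 1/((j:ℝ)+1) := by positivity
      linarith
    rw [caraBall_eq] at hlt
    obtain ⟨x, hxmem, hxlt⟩ := exists_lt_of_lt_csSup (caraSet_nonempty n (Ms j) z0) hlt
    obtain ⟨F, h1, h2, h3, rfl⟩ := hxmem
    exact ⟨F, h1, h2, h3, hxlt.le⟩
  choose F hF1 hF2 hF3 hF4 using hchoice
  have halim : Tendsto (fun j => (caraBall n Ω (ψ j z0) / kobBall n Ω (ψ j z0)) * KM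
      - 1/((j:ℝ)+1)) atTop (nhds KM) := by
    have h1 := (hck.mul_const KM).sub tendsto_one_div_add_atTop_nhds_zero_nat
    simpa using h1
  obtain ⟨f, hfd, hfb, hf0, hfval⟩ := montel hmono hopen hM hF1 hF2 hz0M hF3 hF4 halim
  -- scaled competitors give the lower bound
  have hscale : ∀ r : ℝ, 0 < r → r < 1 → r^(2*n) * KM ≤ caraBall n M z0 := by
    intro r hr0 hr1
    have hfa : DifferentiableAt ℂ f z0 := hfd.differentiableAt (hMopen.mem_nhds hz0M)
    have hrn : ‖(r:ℂ)‖ = r := by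
      rw [Complex.norm_real, Real.norm_eq_abs, abs_of_pos hr0]
    have hdet : (fderiv ℂ (fun x => (r:ℂ) • f x) z0).det
        = (r:ℂ)^n * (fderiv ℂ f z0).det := by
      rw [fderiv_fun_const_smul hfa]
      simp only [ContinuousLinearMap.det, ContinuousLinearMap.coe_smul]
      rw [LinearMap.det_smul, finrank_euclideanSpace_fin]
    have hmem : ‖(fderiv ℂ (fun x => (r:ℂ) • f x) z0).det‖^2 ∈ caraSet n M z0 := by
      refine ⟨fun x => (r:ℂ) • f x, hfd.const_smul (r:ℂ), ?_, ?_, rfl⟩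
      · intro x hx
        rw [mem_ball_zero_iff, norm_smul, hrn]
        calc r * ‖f x‖ ≤ r * 1 := mul_le_mul_of_nonneg_left (hfb x hx) hr0.le
          _ < 1 := by linarith
      · simp only
        rw [hf0, smul_zero]
    have hle : ‖(fderiv ℂ (fun x => (r:ℂ) • f x) z0).det‖^2 ≤ caraBall n M z0 := by
      rw [caraBall_eq]
      exact le_csSup (hCbdd M (hMsub 0)) hmem
    refine le_trans ?_ hle
    rw [hdet, norm_mul, norm_pow, hrn, mul_pow, ← pow_mul]
    rw [show n * 2 = 2 * n from mul_comm n 2]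
    exact mul_le_mul_of_nonneg_left hfval (by positivity)
  have hlower : KM ≤ caraBall n M z0 := by
    have h1 : Tendsto (fun m : ℕ => 1 - 1/((m:ℝ)+1)) atTop (nhds 1) := by
      have h0 : Tendsto (fun _ : ℕ => (1:ℝ)) atTop (nhds 1) := tendsto_const_nhds
      simpa using h0.sub tendsto_one_div_add_atTop_nhds_zero_nat
    have hlim2 : Tendsto (fun m : ℕ => (1 - 1/((m:ℝ)+1))^(2*n) * KM) atTop (nhds KM) := by
      have h2 := (h1.pow (2*n)).mul_const KM
      simpa using h2
    refine le_of_tendsto hlim2 ?_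
    filter_upwards [eventually_ge_atTop 1] with m hm
    have hm1 : (1:ℝ) ≤ (m:ℝ) := by exact_mod_cast hm
    refine hscale _ ?_ ?_
    · have h3 : 1/((m:ℝ)+1) ≤ 1/2 := by
        apply div_le_div_of_nonneg_left one_pos.le (by norm_num)
        · linarith
      linarith
    · have h4 : 0 < 1/((m:ℝ)+1) := by positivity
      linarith
  exact le_antisymm hupper hlower
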